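/- Let C be a cycle of length s ≥ 3 in a finite simple graph G, and let u1, u2 be two distinct vertices of G not on C, each having at least one neighbor on C. Suppose that neither the set of neighbors of u1 on C nor the set of neighbors of u2 on C contains two consecutive vertices of C. If deg_C(u1) ≥ 2, then there exist a neighbor v1 of u1 on C and a neighbor v2 of u2 on C such that 1 ≤ dist_C(v1, v2) ≤ max{3, s/deg_C(u1), ⌊s/2⌋ + 3 − deg_C(u1) − deg_C(u2)}, where dist_C denotes graph distance along the cycle C and deg_C(u) denotes the number of neighbors of u on C. -/

import Mathlib

open SimpleGraph

namespace Dean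

variable {V : Type*}

noncomputable def degN (G : SimpleGraph V) (v : V) : ℕ := (G.neighborSet v).ncard

def HasCycleMod (G : SimpleGraph V) (k : ℕ) (r : ℤ) : Prop :=
  ∃ (v : V) (c : G.Walk v v), c.IsCycle ∧ (k : ℤ) ∣ ((c.length : ℤ) - r)

def HasConsecutiveCycles (G : SimpleGraph V) (k : ℕ) : Prop :=
  ∃ a : ℕ, ∀ i < k, ∃ (v : V) (c : G.Walk v v), c.IsCycle ∧ c.length = a + i

def HasAdmissibleCycles (G : SimpleGraph V) (k : ℕ) : Prop :=
  ∃ a d : ℕ, (d = 1 ∨ d = 2) ∧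
    ∀ i < k, ∃ (v : V) (c : G.Walk v v), c.IsCycle ∧ c.length = a + d * i

/-- `HGraph k n t` : complete bipartite `K_{k,n}` minus `k - t` edges at the vertex
`Sum.inr 0` of the part of size `n`, so that this vertex keeps exactly `t` neighbours. -/
def HGraph (k n t : ℕ) : SimpleGraph (Fin k ⊕ Fin n) :=
  SimpleGraph.fromRel fun x y =>
    ∃ (i : Fin k) (j : Fin n), x = Sum.inl i ∧ y = Sum.inr j ∧ (j.val ≠ 0 ∨ i.val < t)

def IsKkplus1 (k : ℕ) (G : SimpleGraph V) : Prop :=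
  Nonempty (G ≃g completeGraph (Fin (k + 1)))

def IsKkk (k : ℕ) (G : SimpleGraph V) : Prop :=
  Nonempty (G ≃g completeBipartiteGraph (Fin k) (Fin k))

def IsHGraph (k : ℕ) (G : SimpleGraph V) : Prop :=
  ∃ n t, 2 ≤ t ∧ t ≤ k ∧ k < n ∧ Nonempty (G ≃g HGraph k n t)

def IsExceptional (k : ℕ) (G : SimpleGraph V) : Prop :=
  IsKkplus1 k G ∨ IsKkk k G ∨ IsHGraph k G

def IsBipExceptional (k : ℕ) (G : SimpleGraph V) : Prop :=
  IsKkk k G ∨ IsHGraph k G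

def IsCutVertex (G : SimpleGraph V) (v : V) : Prop :=
  ∃ (a b : V) (ha : a ≠ v) (hb : b ≠ v), G.Reachable a b ∧
    ¬ (G.induce {u : V | u ≠ v}).Reachable ⟨a, ha⟩ ⟨b, hb⟩

def NoCutVtxIn (G : SimpleGraph V) (B : Set V) : Prop :=
  ∀ v ∈ B, B = {v} ∨ (G.induce (B \ {v})).Connected

def IsBlockSet (G : SimpleGraph V) (B : Set V) : Prop :=
  (G.induce B).Connected ∧ NoCutVtxIn G B ∧
    ∀ B' : Set V, B ⊆ B' → (G.induce B').Connected → NoCutVtxIn G B' → B' = B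

def IsEndBlock (G : SimpleGraph V) (B : Set V) : Prop :=
  IsBlockSet G B ∧ {v | v ∈ B ∧ IsCutVertex G v}.Subsingleton

def IsThreeConnected (G : SimpleGraph V) : Prop :=
  4 ≤ Nat.card V ∧ ∀ S : Set V, S.ncard ≤ 2 → (G.induce (Sᶜ : Set V)).Connected

def IsTwoConnected (G : SimpleGraph V) : Prop :=
  3 ≤ Nat.card V ∧ ∀ v : V, (G.induce ({v}ᶜ : Set V)).Connected

def TypeOne (k : ℕ) (G : SimpleGraph V) : Prop :=
  IsThreeConnected G ∧ {v : V | degN G v < k}.Subsingleton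

/-- the graph `G - θ + θ₁θ₂`. -/
def modGraph (G : SimpleGraph V) (θ θ₁ θ₂ : V) (h₁ : θ₁ ≠ θ) (h₂ : θ₂ ≠ θ) :
    SimpleGraph ↥{u : V | u ≠ θ} :=
  (G.induce {u : V | u ≠ θ}) ⊔ SimpleGraph.fromEdgeSet {s(⟨θ₁, h₁⟩, ⟨θ₂, h₂⟩)}

def TypeTwo (k : ℕ) (G : SimpleGraph V) (θ θ₁ θ₂ : V) : Prop :=
  degN G θ = 2 ∧ (∀ v, degN G v = 2 → v = θ) ∧
  G.Adj θ θ₁ ∧ G.Adj θ θ₂ ∧ θ₁ ≠ θ₂ ∧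
  ∃ (h₁ : θ₁ ≠ θ) (h₂ : θ₂ ≠ θ),
    IsThreeConnected (modGraph G θ θ₁ θ₂ h₁ h₂) ∧
    ∀ v, k ≤ degN (modGraph G θ θ₁ θ₂ h₁ h₂) v

def IsKWeak (k : ℕ) (G : SimpleGraph V) : Prop :=
  TypeOne k G ∨ ∃ θ θ₁ θ₂, TypeTwo k G θ θ₁ θ₂

inductive IsTrigonal : SimpleGraph V → SimpleGraph V → Set V → Prop
  | base (a b c : V) (hab : a ≠ b) (hbc : b ≠ c) (hac : a ≠ c) :
      IsTrigonal (SimpleGraph.fromEdgeSet {s(a, b), s(b, c), s(a, c)})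
        (SimpleGraph.fromEdgeSet {s(a, b), s(b, c), s(a, c)}) {a, b, c}
  | extend (T B : SimpleGraph V) (S : Set V) (a b x : V)
      (h : IsTrigonal T B S) (hx : x ∉ S) (hab : B.Adj a b) :
      IsTrigonal (T ⊔ SimpleGraph.fromEdgeSet {s(a, x), s(x, b)})
        (B.deleteEdges {s(a, b)} ⊔ SimpleGraph.fromEdgeSet {s(a, x), s(x, b)})
        (insert x S)

inductive IsTetragonal : SimpleGraph V → SimpleGraph V → Set V → Prop
  | base (a b c d : V) (hab : a ≠ b) (hac : a ≠ c) (had : a ≠ d)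
      (hbc : b ≠ c) (hbd : b ≠ d) (hcd : c ≠ d) :
      IsTetragonal (SimpleGraph.fromEdgeSet {s(a, b), s(b, c), s(c, d), s(d, a)})
        (SimpleGraph.fromEdgeSet {s(a, b), s(b, c), s(c, d), s(d, a)}) {a, b, c, d}
  | extend (T B : SimpleGraph V) (S : Set V) (a b x y : V)
      (h : IsTetragonal T B S) (hx : x ∉ S) (hy : y ∉ S) (hxy : x ≠ y) (hab : B.Adj a b) :
      IsTetragonal (T ⊔ SimpleGraph.fromEdgeSet {s(a, x), s(x, y), s(y, b)})
        (B.deleteEdges {s(a, b)} ⊔ SimpleGraph.fromEdgeSet {s(a, x), s(x, y), s(y, b)})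
        (insert x (insert y S))

def IsTetragonalSubgraph (G T B : SimpleGraph V) (S : Set V) : Prop :=
  IsTetragonal T B S ∧ T ≤ G

def IsOptimalTetragonal (G T B : SimpleGraph V) (S : Set V) : Prop :=
  IsTetragonalSubgraph G T B S ∧
  (∀ (T' B' : SimpleGraph V) (S' : Set V),
    IsTetragonalSubgraph G T' B' S' → S'.ncard ≤ S.ncard) ∧
  (∀ (T' B' : SimpleGraph V) (S' : Set V),
    IsTetragonalSubgraph G T' B' S' → S'.ncard = S.ncard →
      (G.induce S').edgeSet.ncard ≤ (G.induce S).edgeSet.ncard)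




/-- cyclic distance between indices `i j` on a cycle of length `s`. -/
def cdist (s i j : ℕ) : ℕ := min ((i - j) + (j - i)) (s - ((i - j) + (j - i)))

lemma cdist_comm (s i j : ℕ) : cdist s i j = cdist s j i := by unfold cdist; omega

lemma cdist_pos {s i j : ℕ} (hi : i < s) (hj : j < s) (h : i ≠ j) : 0 < cdist s i j := by
  unfold cdist; omega

/-- a nonempty subset of `range n` closed under cyclic successor is everything. -/
lemma cyc_closed (n : ℕ) (S : Finset ℕ) (hS : ∀ i ∈ S, i < n)
    (hcl : ∀ i ∈ S, (i + 1) % n ∈ S) (i₀ : ℕ) (h₀ : i₀ ∈ S) : ∀ j < n, j ∈ S := by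
  have hn : 0 < n := lt_of_le_of_lt (Nat.zero_le _) (hS i₀ h₀)
  have key : ∀ k, (i₀ + k) % n ∈ S := by
    intro k
    induction k with
    | zero => simpa [Nat.mod_eq_of_lt (hS _ h₀)] using h₀
    | succ k ih =>
      have h1 := hcl _ ih
      have h2 : ((i₀ + k) % n + 1) % n = (i₀ + (k + 1)) % n := by
        have := Nat.ModEq.add_right 1 ((i₀ + k).mod_modEq n)
        simpa [Nat.add_assoc] using this
      rwa [h2] at h1
  intro j hj
  have hi0 : i₀ < n := hS _ h₀
  have h2 := key (n - i₀ + j)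
  rw [show i₀ + (n - i₀ + j) = n + j by omega] at h2
  rwa [Nat.add_mod_left, Nat.mod_eq_of_lt hj] at h2

lemma exists_exit (n : ℕ) (S : Finset ℕ) (hS : ∀ i ∈ S, i < n)
    (hne : S.Nonempty) (j : ℕ) (hj : j < n) (hjS : j ∉ S) :
    ∃ i ∈ S, (i + 1) % n ∉ S := by
  by_contra h
  push_neg at h
  obtain ⟨i₀, h₀⟩ := hne
  exact hjS (cyc_closed n S hS h i₀ h₀ j hj)

lemma core (s m : ℕ) (A B : Finset ℕ) (hA : ∀ i ∈ A, i < s) (hB : ∀ i ∈ B, i < s)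
    (hA2 : 2 ≤ A.card) (hB1 : B.Nonempty)
    (hm : 4 ≤ m)
    (hsA : s < m * A.card)
    (hsum : s + 6 < 2 * (A.card + B.card + m))
    (hAB : ∀ i ∈ A, ∀ j ∈ B, i ≠ j → m ≤ cdist s i j)
    (hAA : ∀ i ∈ A, ∀ j ∈ A, i ≠ j → 2 ≤ cdist s i j)
    (hBB : ∀ i ∈ B, ∀ j ∈ B, i ≠ j → 2 ≤ cdist s i j) : False := by
  classical
  set P := A ∪ B with hP
  set l := P.sort (· ≤ ·) with hl
  set n := P.card with hndef
  have hln : l.length = n := Finset.length_sort _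
  set L : ℕ → ℕ := fun i => l.getD i 0 with hLdef
  have hgetD : ∀ i (hi : i < n), L i = l[i]'(by rw [hln]; omega) := by
    intro i hi; exact List.getD_eq_getElem l 0 (by rw [hln]; omega)
  have hmem : ∀ i, i < n → L i ∈ P := by
    intro i hi
    rw [hgetD i hi]
    exact (Finset.mem_sort (α := ℕ) (· ≤ ·)).mp (List.getElem_mem _)
  have hmono : ∀ i j, i < j → j < n → L i < L j := by
    intro i j hij hj
    rw [hgetD i (by omega), hgetD j hj]
    exact List.pairwise_iff_getElem.mp (Finset.sortedLT_sort P).pairwise i j (by rw [hln]; omega)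
      (by rw [hln]; omega) hij
  have hsurj : ∀ z ∈ P, ∃ i, i < n ∧ L i = z := by
    intro z hz
    have : z ∈ l := (Finset.mem_sort (α := ℕ) (· ≤ ·)).mpr hz
    obtain ⟨i, hi, he⟩ := List.mem_iff_getElem.mp this
    have hin : i < n := by rw [← hln]; omega
    exact ⟨i, hin, by rw [hgetD i hin]; exact he⟩
  have hlt : ∀ i, i < n → L i < s := by
    intro i hi
    have := hmem i hi
    rw [hP, Finset.mem_union] at this
    rcases this with h | h
    · exact hA _ h
    · exact hB _ h
  have hn2 : 2 ≤ n := le_trans hA2 (Finset.card_le_card Finset.subset_union_left)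
  set σ : ℕ → ℕ := fun i => (i + 1) % n with hσdef
  have hσlt : ∀ i, i < n → σ i < n := fun i hi => Nat.mod_lt _ (by omega)
  have hσeq : ∀ i, i + 1 < n → σ i = i + 1 := fun i hi => Nat.mod_eq_of_lt hi
  have hσlast : σ (n - 1) = 0 := by
    simp only [hσdef]
    rw [show n - 1 + 1 = n by omega, Nat.mod_self]
  have hLne : ∀ i, i < n → L i ≠ L (σ i) := by
    intro i hi
    by_cases h : i + 1 < n
    · rw [hσeq i h]; exact Nat.ne_of_lt (hmono i (i + 1) (by omega) h)
    · have : i = n - 1 := by omega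
      subst this
      rw [hσlast]
      exact (Nat.ne_of_lt (hmono 0 (n - 1) (by omega) (by omega))).symm
  set gap : ℕ → ℕ := fun i => if i + 1 < n then L (i + 1) - L i else s - L (n - 1) + L 0
    with hgapdef
  -- telescoping sum
  have htel : ∀ k, k ≤ n - 1 → ∑ i ∈ Finset.range k, gap i = L k - L 0 := by
    intro k
    induction k with
    | zero => simp
    | succ k ih =>
      intro hk
      rw [Finset.sum_range_succ, ih (by omega)]
      have h1 : gap k = L (k + 1) - L k := by
        simp only [hgapdef]; rw [if_pos (by omega)]
      have h2 : L k < L (k + 1) := hmono k (k + 1) (by omega) (by omega)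
      have h3 : L 0 ≤ L k := by
        rcases Nat.eq_zero_or_pos k with h | h
        · subst h; rfl
        · exact le_of_lt (hmono 0 k h (by omega))
      omega
  have hgapsum : ∑ i ∈ Finset.range n, gap i = s := by
    have h1 : n = (n - 1) + 1 := by omega
    have h0 : ∑ i ∈ Finset.range n, gap i
        = ∑ i ∈ Finset.range (n - 1), gap i + gap (n - 1) := by
      conv_lhs => rw [h1]
      rw [Finset.sum_range_succ]
    have h5 := htel (n - 1) (by omega)
    have h2 : gap (n - 1) = s - L (n - 1) + L 0 := by
      simp only [hgapdef]; rw [if_neg (by omega)]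
    have h3 : L 0 ≤ L (n - 1) := le_of_lt (hmono 0 (n - 1) (by omega) (by omega))
    have h4 : L (n - 1) < s := hlt _ (by omega)
    omega
  have hgap_ge : ∀ i, i < n → cdist s (L i) (L (σ i)) ≤ gap i := by
    intro i hi
    by_cases h : i + 1 < n
    · rw [hσeq i h]
      have h2 : L i < L (i + 1) := hmono i (i + 1) (by omega) h
      have h3 : gap i = L (i + 1) - L i := by simp only [hgapdef]; rw [if_pos h]
      unfold cdist; omega
    · have hie : i = n - 1 := by omega
      subst hie
      rw [hσlast]
      have h2 : L 0 < L (n - 1) := hmono 0 (n - 1) (by omega) (by omega)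
      have h3 : gap (n - 1) = s - L (n - 1) + L 0 := by
        simp only [hgapdef]; rw [if_neg (by omega)]
      have h4 : L (n - 1) < s := hlt _ (by omega)
      unfold cdist; omega
  -- case A = B
  by_cases hABeq : A = B
  · have hall : ∀ i ∈ Finset.range n, m ≤ gap i := by
      intro i hi
      rw [Finset.mem_range] at hi
      have h1 : L i ∈ A := by
        have := hmem i hi; rw [hP, ← hABeq, Finset.union_self] at this; exact this
      have h2 : L (σ i) ∈ B := by
        have := hmem (σ i) (hσlt i hi); rw [hP, ← hABeq, Finset.union_self, hABeq] at this
        exact this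
      exact le_trans (hAB _ h1 _ h2 (hLne i hi)) (hgap_ge i hi)
    have h1 : n * m ≤ s := by
      calc n * m = ∑ _i ∈ Finset.range n, m := by rw [Finset.sum_const, Finset.card_range,
            smul_eq_mul]
        _ ≤ ∑ i ∈ Finset.range n, gap i := Finset.sum_le_sum hall
        _ = s := hgapsum
    have h2 : n = A.card := by rw [hndef, hP, ← hABeq, Finset.union_self]
    have h3 : m * A.card = n * m := by rw [h2]; ring
    omega
  -- case A ≠ B
  · set mixed : ℕ → Prop := fun i => (L i ∈ A ∧ L (σ i) ∈ B) ∨ (L i ∈ B ∧ L (σ i) ∈ A)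
      with hmixeddef
    have hbound : ∀ i ∈ Finset.range n, (if mixed i then m else 2) ≤ gap i := by
      intro i hi
      rw [Finset.mem_range] at hi
      have hiP := hmem i hi
      have hσP := hmem (σ i) (hσlt i hi)
      rw [hP, Finset.mem_union] at hiP hσP
      by_cases hmx : mixed i
      · rw [if_pos hmx]
        refine le_trans ?_ (hgap_ge i hi)
        rcases hmx with ⟨h1, h2⟩ | ⟨h1, h2⟩
        · exact hAB _ h1 _ h2 (hLne i hi)
        · rw [cdist_comm]
          exact hAB _ h2 _ h1 (Ne.symm (hLne i hi))
      · rw [if_neg hmx]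
        refine le_trans ?_ (hgap_ge i hi)
        rcases hiP with h1 | h1
        · rcases hσP with h2 | h2
          · exact hAA _ h1 _ h2 (hLne i hi)
          · exact absurd (Or.inl ⟨h1, h2⟩) hmx
        · rcases hσP with h2 | h2
          · exact absurd (Or.inr ⟨h1, h2⟩) hmx
          · exact hBB _ h1 _ h2 (hLne i hi)
    set X := ((Finset.range n).filter mixed).card with hXdef
    set Y := ((Finset.range n).filter (fun i => ¬ mixed i)).card with hYdef
    have hXY : X + Y = n := by
      rw [hXdef, hYdef, Finset.card_filter_add_card_filter_not, Finset.card_range]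
    have hsum2 : X * m + Y * 2 ≤ s := by
      calc X * m + Y * 2
          = ∑ i ∈ Finset.range n, (if mixed i then m else 2) := by
            rw [Finset.sum_ite, Finset.sum_const, Finset.sum_const, smul_eq_mul, smul_eq_mul]
        _ ≤ ∑ i ∈ Finset.range n, gap i := Finset.sum_le_sum hbound
        _ = s := hgapsum
    set CI := (Finset.range n).filter (fun i => L i ∈ A ∧ L i ∈ B) with hCIdef
    have hCIc : CI.card = (A ∩ B).card := by
      have himg : (A ∩ B) = CI.image L := by
        ext z
        constructor
        · intro hz
          rw [Finset.mem_inter] at hz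
          obtain ⟨i, hi, he⟩ := hsurj z (by rw [hP, Finset.mem_union]; exact Or.inl hz.1)
          refine Finset.mem_image.mpr ⟨i, ?_, he⟩
          rw [hCIdef, Finset.mem_filter, Finset.mem_range]
          exact ⟨hi, by rw [he]; exact hz.1, by rw [he]; exact hz.2⟩
        · intro hz
          obtain ⟨i, hi, he⟩ := Finset.mem_image.mp hz
          rw [hCIdef, Finset.mem_filter] at hi
          rw [Finset.mem_inter, ← he]
          exact ⟨hi.2.1, hi.2.2⟩
      rw [himg, Finset.card_image_of_injOn]
      intro i hi j hj he
      rw [Finset.mem_coe, hCIdef, Finset.mem_filter, Finset.mem_range] at hi hj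
      by_contra hne
      rcases Nat.lt_or_ge i j with h | h
      · exact absurd he (Nat.ne_of_lt (hmono i j h hj.1))
      · have : j < i := by omega
        exact absurd he.symm (Nat.ne_of_lt (hmono j i this hi.1))
    have hcard_ui : n + (A ∩ B).card = A.card + B.card := by
      rw [hndef, hP]
      exact Finset.card_union_add_card_inter A B
    set c := (A ∩ B).card with hcdef
    have hCImixed : CI ⊆ (Finset.range n).filter mixed := by
      intro i hi
      rw [hCIdef, Finset.mem_filter, Finset.mem_range] at hi
      rw [Finset.mem_filter, Finset.mem_range]
      refine ⟨hi.1, ?_⟩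
      have hσP := hmem (σ i) (hσlt i hi.1)
      rw [hP, Finset.mem_union] at hσP
      rcases hσP with h | h
      · exact Or.inr ⟨hi.2.2, h⟩
      · exact Or.inl ⟨hi.2.1, h⟩
    obtain ⟨m', rfl⟩ : ∃ m', m = m' + 4 := ⟨m - 4, by omega⟩
    by_cases hc0 : c = 0
    · -- A and B disjoint
      have hdisj : ∀ z, z ∈ A → z ∈ B → False := by
        intro z hzA hzB
        have : z ∈ A ∩ B := Finset.mem_inter.mpr ⟨hzA, hzB⟩
        have := Finset.card_pos.mpr ⟨z, this⟩
        omega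
      -- index sets
      set SA := (Finset.range n).filter (fun i => L i ∈ A) with hSAdef
      set SB := (Finset.range n).filter (fun i => L i ∈ B) with hSBdef
      obtain ⟨zb, hzb⟩ := hB1
      obtain ⟨jb, hjb, hjbe⟩ := hsurj zb (by rw [hP, Finset.mem_union]; exact Or.inr hzb)
      obtain ⟨za, hza⟩ := Finset.card_pos.mp (by omega : 0 < A.card)
      obtain ⟨ja, hja, hjae⟩ := hsurj za (by rw [hP, Finset.mem_union]; exact Or.inl hza)
      have hSAne : SA.Nonempty := ⟨ja, by
        rw [hSAdef, Finset.mem_filter, Finset.mem_range]; exact ⟨hja, by rw [hjae]; exact hza⟩⟩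
      have hSBne : SB.Nonempty := ⟨jb, by
        rw [hSBdef, Finset.mem_filter, Finset.mem_range]; exact ⟨hjb, by rw [hjbe]; exact hzb⟩⟩
      have hjbSA : jb ∉ SA := by
        rw [hSAdef, Finset.mem_filter]
        rintro ⟨-, h⟩
        exact hdisj _ h (by rw [hjbe]; exact hzb)
      have hjaSB : ja ∉ SB := by
        rw [hSBdef, Finset.mem_filter]
        rintro ⟨-, h⟩
        exact hdisj _ (by rw [hjae]; exact hza) h
      obtain ⟨i₁, hi₁, hi₁x⟩ := exists_exit n SA
        (fun i hi => by rw [hSAdef, Finset.mem_filter, Finset.mem_range] at hi; exact hi.1)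
        hSAne jb hjb hjbSA
      obtain ⟨i₂, hi₂, hi₂x⟩ := exists_exit n SB
        (fun i hi => by rw [hSBdef, Finset.mem_filter, Finset.mem_range] at hi; exact hi.1)
        hSBne ja hja hjaSB
      rw [hSAdef, Finset.mem_filter, Finset.mem_range] at hi₁
      rw [hSBdef, Finset.mem_filter, Finset.mem_range] at hi₂
      have hmx1 : mixed i₁ := by
        have hσP := hmem (σ i₁) (hσlt i₁ hi₁.1)
        rw [hP, Finset.mem_union] at hσP
        rcases hσP with h | h
        · exact absurd (by
            rw [hSAdef, Finset.mem_filter, Finset.mem_range]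
            exact ⟨hσlt i₁ hi₁.1, h⟩) hi₁x
        · exact Or.inl ⟨hi₁.2, h⟩
      have hmx2 : mixed i₂ := by
        have hσP := hmem (σ i₂) (hσlt i₂ hi₂.1)
        rw [hP, Finset.mem_union] at hσP
        rcases hσP with h | h
        · exact Or.inr ⟨hi₂.2, h⟩
        · exact absurd (by
            rw [hSBdef, Finset.mem_filter, Finset.mem_range]
            exact ⟨hσlt i₂ hi₂.1, h⟩) hi₂x
      have hne12 : i₁ ≠ i₂ := by
        intro he
        exact hdisj _ hi₁.2 (he ▸ hi₂.2)
      have hX2 : 2 ≤ X := by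
        rw [hXdef]
        have : ({i₁, i₂} : Finset ℕ) ⊆ (Finset.range n).filter mixed := by
          intro i hi
          rw [Finset.mem_insert, Finset.mem_singleton] at hi
          rw [Finset.mem_filter, Finset.mem_range]
          rcases hi with rfl | rfl
          · exact ⟨hi₁.1, hmx1⟩
          · exact ⟨hi₂.1, hmx2⟩
        calc 2 = ({i₁, i₂} : Finset ℕ).card := by rw [Finset.card_insert_of_notMem (by
                simpa using hne12), Finset.card_singleton]
          _ ≤ _ := Finset.card_le_card this
      -- arithmetic
      have e1 : X * (m' + 4) = X * m' + X * 4 := by ring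
      have e2 : 2 * m' ≤ X * m' := Nat.mul_le_mul_right m' hX2
      omega
    · -- c ≥ 1
      set T := (Finset.range n).filter (fun i => ¬ (L i ∈ A ∧ L i ∈ B)) with hTdef
      have hTne : T.Nonempty := by
        by_contra h
        rw [Finset.not_nonempty_iff_eq_empty] at h
        have hall : ∀ i, i < n → L i ∈ A ∧ L i ∈ B := by
          intro i hi
          by_contra hcon
          have : i ∈ T := by rw [hTdef, Finset.mem_filter, Finset.mem_range]; exact ⟨hi, hcon⟩
          rw [h] at this
          exact absurd this (Finset.notMem_empty i)
        apply hABeq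
        ext z
        constructor
        · intro hz
          obtain ⟨i, hi, he⟩ := hsurj z (by rw [hP, Finset.mem_union]; exact Or.inl hz)
          rw [← he]; exact (hall i hi).2
        · intro hz
          obtain ⟨i, hi, he⟩ := hsurj z (by rw [hP, Finset.mem_union]; exact Or.inr hz)
          rw [← he]; exact (hall i hi).1
      obtain ⟨j₀, hj₀⟩ := Finset.card_pos.mp (by omega : 0 < CI.card)
      have hj₀r := hj₀
      rw [hCIdef, Finset.mem_filter, Finset.mem_range] at hj₀r
      have hj₀T : j₀ ∉ T := by
        rw [hTdef, Finset.mem_filter]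
        rintro ⟨-, h⟩
        exact h ⟨hj₀r.2.1, hj₀r.2.2⟩
      obtain ⟨i₁, hi₁, hi₁x⟩ := exists_exit n T
        (fun i hi => by rw [hTdef, Finset.mem_filter, Finset.mem_range] at hi; exact hi.1)
        hTne j₀ hj₀r.1 hj₀T
      rw [hTdef, Finset.mem_filter, Finset.mem_range] at hi₁
      have hσco : L (σ i₁) ∈ A ∧ L (σ i₁) ∈ B := by
        by_contra h
        apply hi₁x
        rw [hTdef, Finset.mem_filter, Finset.mem_range]
        exact ⟨hσlt i₁ hi₁.1, h⟩
      have hmx1 : mixed i₁ := by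
        have hiP := hmem i₁ hi₁.1
        rw [hP, Finset.mem_union] at hiP
        rcases hiP with h | h
        · exact Or.inl ⟨h, hσco.2⟩
        · exact Or.inr ⟨h, hσco.1⟩
      have hi₁CI : i₁ ∉ CI := by
        rw [hCIdef, Finset.mem_filter]
        rintro ⟨-, h⟩
        exact hi₁.2 h
      have hXc : c + 1 ≤ X := by
        rw [hXdef]
        have hsub : insert i₁ CI ⊆ (Finset.range n).filter mixed := by
          intro i hi
          rw [Finset.mem_insert] at hi
          rcases hi with rfl | hi
          · rw [Finset.mem_filter, Finset.mem_range]; exact ⟨hi₁.1, hmx1⟩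
          · exact hCImixed hi
        calc c + 1 = (insert i₁ CI).card := by
              rw [Finset.card_insert_of_notMem hi₁CI, hCIc]
          _ ≤ _ := Finset.card_le_card hsub
      -- arithmetic
      have e1 : X * (m' + 4) = X * m' + X * 4 := by ring
      have e2 : (c + 1) * m' ≤ X * m' := Nat.mul_le_mul_right m' hXc
      have e3 : (c + 1) * m' = c * m' + m' := by ring
      have e4 : 1 * m' ≤ c * m' := Nat.mul_le_mul_right m' (by omega)
      omega





lemma getVert_eq_support_getElem {V : Type*} {G : SimpleGraph V} {u v : V} (p : G.Walk u v) (i : ℕ) (hi : i ≤ p.length) :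
    p.getVert i = p.support[i]'(by rw [Walk.length_support]; omega) := by
  induction p generalizing i with
  | nil =>
    have : i = 0 := by simpa using hi
    subst this; simp
  | cons h q ih =>
    cases i with
    | zero => simp
    | succ n =>
      simp only [Walk.support_cons, List.getElem_cons_succ, Walk.getVert_cons_succ]
      exact ih n (by simpa using hi)

lemma cycle_getVert_inj {V : Type*} {G : SimpleGraph V} {x : V} {c : G.Walk x x} (hc : c.IsCycle)
    {i j : ℕ} (hi : i < c.length) (hj : j < c.length) (h : c.getVert i = c.getVert j) : i = j := by
  have hnd := hc.support_nodup
  have hlen : c.support.length = c.length + 1 := c.length_support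
  have htl : c.support.tail.length = c.length := by
    rw [List.length_tail, hlen]; omega
  have h3 := hc.three_le_length
  -- tail[k] = getVert (k+1)
  have htail : ∀ k (hk : k < c.length), c.support.tail[k]'(by omega)
      = c.getVert (k + 1) := by
    intro k hk
    rw [List.getElem_tail, getVert_eq_support_getElem c (k + 1) (by omega)]
  obtain ⟨t, ht⟩ : ∃ t, c.length = t + 1 := ⟨c.length - 1, by omega⟩
  have hlast : c.support.tail[t]'(by omega) = x := by
    rw [htail t (by omega), ← ht]
    exact c.getVert_length
  have hkey : ∀ k (hk : k < t), c.getVert (k + 1) ≠ x := by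
    intro k hk he
    have h1 : c.support.tail[k]'(by omega) = x := by rw [htail k (by omega)]; exact he
    have := (List.Nodup.getElem_inj_iff hnd).mp (h1.trans hlast.symm)
    omega
  rcases Nat.eq_zero_or_pos i with hi0 | hi0
  · rcases Nat.eq_zero_or_pos j with hj0 | hj0
    · omega
    · subst hi0
      obtain ⟨b, rfl⟩ : ∃ b, j = b + 1 := ⟨j - 1, by omega⟩
      rw [c.getVert_zero] at h
      exact absurd h.symm (hkey b (by omega))
  · rcases Nat.eq_zero_or_pos j with hj0 | hj0
    · subst hj0
      obtain ⟨a, rfl⟩ : ∃ a, i = a + 1 := ⟨i - 1, by omega⟩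
      rw [c.getVert_zero] at h
      exact absurd h (hkey a (by omega))
    · obtain ⟨a, rfl⟩ : ∃ a, i = a + 1 := ⟨i - 1, by omega⟩
      obtain ⟨b, rfl⟩ : ∃ b, j = b + 1 := ⟨j - 1, by omega⟩
      have hti : c.support.tail[a]'(by omega) = c.support.tail[b]'(by omega) := by
        rw [htail a (by omega), htail b (by omega)]
        exact h
      have := (List.Nodup.getElem_inj_iff hnd).mp hti
      omega

lemma cycle_edist_chain {V : Type*} {G : SimpleGraph V} {x : V} (c : G.Walk x x) :
    ∀ (k i : ℕ), i + k ≤ c.length →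
      (c.toSubgraph.spanningCoe).edist (c.getVert i) (c.getVert (i + k)) ≤ (k : ℕ∞) := by
  intro k
  induction k with
  | zero => intro i _; simp
  | succ k ih =>
    intro i hik
    have h1 := ih i (by omega)
    have hadj : (c.toSubgraph.spanningCoe).Adj (c.getVert (i + k)) (c.getVert (i + k + 1)) := by
      rw [Subgraph.spanningCoe_adj]
      exact c.toSubgraph_adj_getVert (by omega)
    have h2 : (c.toSubgraph.spanningCoe).edist (c.getVert (i + k)) (c.getVert (i + k + 1)) ≤ 1 := by
      rw [edist_eq_one_iff_adj.mpr hadj]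
    calc (c.toSubgraph.spanningCoe).edist (c.getVert i) (c.getVert (i + (k + 1)))
        ≤ (c.toSubgraph.spanningCoe).edist (c.getVert i) (c.getVert (i + k))
          + (c.toSubgraph.spanningCoe).edist (c.getVert (i + k)) (c.getVert (i + k + 1)) := by
            rw [show i + (k + 1) = i + k + 1 by omega]
            exact SimpleGraph.edist_triangle
      _ ≤ (k : ℕ∞) + 1 := add_le_add h1 h2
      _ = ((k + 1 : ℕ) : ℕ∞) := by push_cast; rfl






/-- Lemma 2.4 (2): close neighbours on a cycle when `deg_C(u₁) ≥ 2`. -/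
theorem short_dist_two {V : Type*} [Fintype V] (G : SimpleGraph V) (s : ℕ) (hs : 3 ≤ s)
    (x : V) (c : G.Walk x x) (hc : c.IsCycle) (hlen : c.length = s)
    (u₁ u₂ : V) (hne : u₁ ≠ u₂) (hu₁ : u₁ ∉ c.support) (hu₂ : u₂ ∉ c.support)
    (hd₁ : 2 ≤ (G.neighborSet u₁ ∩ {v | v ∈ c.support}).ncard)
    (hd₂ : 0 < (G.neighborSet u₂ ∩ {v | v ∈ c.support}).ncard)
    (hcons₁ : ∀ v w : V, G.Adj u₁ v → G.Adj u₁ w → ¬ c.toSubgraph.spanningCoe.Adj v w)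
    (hcons₂ : ∀ v w : V, G.Adj u₂ v → G.Adj u₂ w → ¬ c.toSubgraph.spanningCoe.Adj v w) :
    ∃ v₁ v₂ : V, v₁ ∈ c.support ∧ v₂ ∈ c.support ∧ G.Adj u₁ v₁ ∧ G.Adj u₂ v₂ ∧
      1 ≤ c.toSubgraph.spanningCoe.dist v₁ v₂ ∧
      (c.toSubgraph.spanningCoe.dist v₁ v₂ : ℝ) ≤
        max 3 (max
          ((s : ℝ) / ((G.neighborSet u₁ ∩ {v | v ∈ c.support}).ncard : ℝ))
          (((s / 2 : ℕ) : ℝ) + 3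
            - ((G.neighborSet u₁ ∩ {v | v ∈ c.support}).ncard : ℝ)
            - ((G.neighborSet u₂ ∩ {v | v ∈ c.support}).ncard : ℝ))) := by
  classical
  set H := c.toSubgraph.spanningCoe with hH
  -- basic getVert facts
  have hvs0 : c.getVert s = c.getVert 0 := by
    rw [c.getVert_zero, ← hlen]; exact c.getVert_length
  have hinj : ∀ i, i < s → ∀ j, j < s → c.getVert i = c.getVert j → i = j := by
    intro i hi j hj h
    exact cycle_getVert_inj hc (by omega) (by omega) h
  -- adjacency along the cycle
  have hstep : ∀ i, i < s → H.Adj (c.getVert i) (c.getVert (i + 1)) := by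
    intro i hi
    rw [hH, Subgraph.spanningCoe_adj]
    exact c.toSubgraph_adj_getVert (by omega)
  -- edist/dist upper bounds
  have hchain := cycle_edist_chain c
  have hedub1 : ∀ i j, i ≤ j → j ≤ s → H.edist (c.getVert i) (c.getVert j) ≤ ((j - i : ℕ) : ℕ∞) := by
    intro i j hij hjs
    have h1 := hchain (j - i) i (by omega)
    rwa [show i + (j - i) = j by omega] at h1
  have hedub2 : ∀ i j, i ≤ j → j ≤ s →
      H.edist (c.getVert i) (c.getVert j) ≤ ((s - j + i : ℕ) : ℕ∞) := by
    intro i j hij hjs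
    have ha := hchain (s - j) j (by omega)
    rw [show j + (s - j) = s by omega] at ha
    have hb := hchain i 0 (by omega)
    rw [show (0 : ℕ) + i = i by omega] at hb
    calc H.edist (c.getVert i) (c.getVert j) = H.edist (c.getVert j) (c.getVert i) :=
          edist_comm
      _ ≤ H.edist (c.getVert j) (c.getVert s) + H.edist (c.getVert s) (c.getVert i) :=
          SimpleGraph.edist_triangle
      _ = H.edist (c.getVert j) (c.getVert s) + H.edist (c.getVert 0) (c.getVert i) := by
          rw [hvs0]
      _ ≤ ((s - j : ℕ) : ℕ∞) + ((i : ℕ) : ℕ∞) := add_le_add ha hb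
      _ = ((s - j + i : ℕ) : ℕ∞) := by push_cast; rfl
  have hreach : ∀ i j, i ≤ s → j ≤ s → H.Reachable (c.getVert i) (c.getVert j) := by
    intro i j hi hj
    rcases le_total i j with h | h
    · exact reachable_of_edist_ne_top (lt_of_le_of_lt (hedub1 i j h hj)
        (ENat.coe_lt_top _)).ne
    · exact (reachable_of_edist_ne_top (lt_of_le_of_lt (hedub1 j i h hi)
        (ENat.coe_lt_top _)).ne).symm
  have hddle : ∀ i j, i ≤ j → j ≤ s → H.dist (c.getVert i) (c.getVert j) ≤ min (j - i) (s - j + i) := by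
    intro i j hij hjs
    have h1 : H.dist (c.getVert i) (c.getVert j) ≤ j - i := by
      have := ENat.toNat_le_toNat (hedub1 i j hij hjs) (ENat.coe_ne_top _)
      simp only [ENat.toNat_coe] at this; exact this
    have h2 : H.dist (c.getVert i) (c.getVert j) ≤ s - j + i := by
      have := ENat.toNat_le_toNat (hedub2 i j hij hjs) (ENat.coe_ne_top _)
      simp only [ENat.toNat_coe] at this; exact this
    omega
  have hdub : ∀ i j, i < s → j < s → H.dist (c.getVert i) (c.getVert j) ≤ cdist s i j := by
    intro i j hi hj
    rcases le_total i j with h | h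
    · have := hddle i j h (by omega)
      unfold cdist
      omega
    · have := hddle j i h (by omega)
      rw [SimpleGraph.dist_comm] at this
      unfold cdist
      omega
  -- index sets
  set IA := (Finset.range s).filter (fun i => G.Adj u₁ (c.getVert i)) with hIA
  set IB := (Finset.range s).filter (fun i => G.Adj u₂ (c.getVert i)) with hIB
  have hIAlt : ∀ i ∈ IA, i < s := by
    intro i hi; rw [hIA, Finset.mem_filter, Finset.mem_range] at hi; exact hi.1
  have hIBlt : ∀ i ∈ IB, i < s := by
    intro i hi; rw [hIB, Finset.mem_filter, Finset.mem_range] at hi; exact hi.1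
  have hIAadj : ∀ i ∈ IA, G.Adj u₁ (c.getVert i) := by
    intro i hi; rw [hIA, Finset.mem_filter] at hi; exact hi.2
  have hIBadj : ∀ i ∈ IB, G.Adj u₂ (c.getVert i) := by
    intro i hi; rw [hIB, Finset.mem_filter] at hi; exact hi.2
  -- cardinalities
  have hcardeq : ∀ (u' : V), (G.neighborSet u' ∩ {w | w ∈ c.support}).ncard
      = ((Finset.range s).filter (fun i => G.Adj u' (c.getVert i))).card := by
    intro u'
    have hSeq : G.neighborSet u' ∩ {w | w ∈ c.support}
        = ↑(((Finset.range s).filter (fun i => G.Adj u' (c.getVert i))).image c.getVert) := by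
      ext w
      simp only [Set.mem_inter_iff, mem_neighborSet, Set.mem_setOf_eq, Finset.coe_image,
        Set.mem_image, Finset.mem_coe, Finset.mem_filter, Finset.mem_range]
      constructor
      · rintro ⟨hadj, hsup⟩
        obtain ⟨k, hk, hkle⟩ := Walk.mem_support_iff_exists_getVert.mp hsup
        rcases Nat.lt_or_ge k s with hks | hks
        · exact ⟨k, ⟨hks, by rwa [hk]⟩, hk⟩
        · have hkeq : k = s := by omega
          have hgv : c.getVert 0 = w := by rw [← hvs0, ← hkeq]; exact hk
          exact ⟨0, ⟨by omega, by rwa [hgv]⟩, hgv⟩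
      · rintro ⟨k, ⟨hks, hadj⟩, hk⟩
        refine ⟨by rwa [hk] at hadj, ?_⟩
        exact Walk.mem_support_iff_exists_getVert.mpr ⟨k, hk, by omega⟩
    rw [hSeq, Set.ncard_coe_finset, Finset.card_image_of_injOn]
    intro i hi j hj he
    rw [Finset.mem_coe, Finset.mem_filter, Finset.mem_range] at hi hj
    exact hinj i hi.1 j hj.1 he
  have ha : (G.neighborSet u₁ ∩ {v | v ∈ c.support}).ncard = IA.card := hcardeq u₁
  have hb : (G.neighborSet u₂ ∩ {v | v ∈ c.support}).ncard = IB.card := hcardeq u₂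
  have ha2 : 2 ≤ IA.card := ha ▸ hd₁
  have hb1 : 0 < IB.card := hb ▸ hd₂
  -- spread conditions
  have hspread : ∀ (u' : V), (∀ p q : V, G.Adj u' p → G.Adj u' q → ¬ H.Adj p q) →
      ∀ i, i < s → ∀ j, j < s → i ≠ j → G.Adj u' (c.getVert i) → G.Adj u' (c.getVert j) →
      2 ≤ cdist s i j := by
    intro u' hcons i hi j hj hij hai haj
    have h1 : 0 < cdist s i j := cdist_pos hi hj hij
    by_contra hcon
    have hc1 : cdist s i j = 1 := by omega
    have hcases : (i = j + 1) ∨ (j = i + 1) ∨ (i = 0 ∧ j = s - 1) ∨ (j = 0 ∧ i = s - 1) := by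
      unfold cdist at hc1
      omega
    have hwrap : H.Adj (c.getVert (s - 1)) (c.getVert 0) := by
      have h2 := hstep (s - 1) (by omega)
      rwa [show s - 1 + 1 = s by omega, hvs0] at h2
    rcases hcases with h | h | ⟨h, h'⟩ | ⟨h, h'⟩
    · exact hcons _ _ haj hai (by subst h; exact hstep j (by omega))
    · exact hcons _ _ hai haj (by subst h; exact hstep i (by omega))
    · exact hcons _ _ haj hai (by subst h; subst h'; exact hwrap)
    · exact hcons _ _ hai haj (by subst h; subst h'; exact hwrap)
  have hAA : ∀ i ∈ IA, ∀ j ∈ IA, i ≠ j → 2 ≤ cdist s i j := by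
    intro i hi j hj hij
    exact hspread u₁ hcons₁ i (hIAlt i hi) j (hIAlt j hj) hij (hIAadj i hi) (hIAadj j hj)
  have hBB : ∀ i ∈ IB, ∀ j ∈ IB, i ≠ j → 2 ≤ cdist s i j := by
    intro i hi j hj hij
    exact hspread u₂ hcons₂ i (hIBlt i hi) j (hIBlt j hj) hij (hIBadj i hi) (hIBadj j hj)
  -- minimal pair distance
  set F := (IA ×ˢ IB).filter (fun p => p.1 ≠ p.2) with hF
  have hFne : F.Nonempty := by
    obtain ⟨j, hj⟩ := Finset.card_pos.mp hb1
    obtain ⟨i, hi, i', hi', hii'⟩ := Finset.one_lt_card.mp (by omega : 1 < IA.card)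
    by_cases h : i = j
    · refine ⟨(i', j), ?_⟩
      rw [hF, Finset.mem_filter, Finset.mem_product]
      exact ⟨⟨hi', hj⟩, by subst h; exact hii'.symm⟩
    · refine ⟨(i, j), ?_⟩
      rw [hF, Finset.mem_filter, Finset.mem_product]
      exact ⟨⟨hi, hj⟩, h⟩
  set W := F.image (fun p => cdist s p.1 p.2) with hW
  have hWne : W.Nonempty := hFne.image _
  set D := W.min' hWne with hD
  obtain ⟨p₀, hp₀, hpe⟩ := Finset.mem_image.mp (W.min'_mem hWne)
  have hmin : ∀ p ∈ F, D ≤ cdist s p.1 p.2 := fun p hp =>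
    W.min'_le _ (Finset.mem_image_of_mem _ hp)
  rw [hF, Finset.mem_filter, Finset.mem_product] at hp₀
  obtain ⟨⟨hp₀A, hp₀B⟩, hp₀ne⟩ := hp₀
  rw [ha, hb]
  by_cases hcase : (D : ℝ) ≤ max 3 (max ((s : ℝ) / (IA.card : ℝ))
      (((s / 2 : ℕ) : ℝ) + 3 - (IA.card : ℝ) - (IB.card : ℝ)))
  · -- output the minimal pair
    refine ⟨c.getVert p₀.1, c.getVert p₀.2, ?_, ?_, hIAadj _ hp₀A, hIBadj _ hp₀B, ?_, ?_⟩
    · exact Walk.mem_support_iff_exists_getVert.mpr ⟨p₀.1, rfl, by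
        have := hIAlt _ hp₀A; omega⟩
    · exact Walk.mem_support_iff_exists_getVert.mpr ⟨p₀.2, rfl, by
        have := hIBlt _ hp₀B; omega⟩
    · have hner : c.getVert p₀.1 ≠ c.getVert p₀.2 := by
        intro he
        exact hp₀ne (hinj _ (hIAlt _ hp₀A) _ (hIBlt _ hp₀B) he)
      exact (hreach p₀.1 p₀.2 (by have := hIAlt _ hp₀A; omega)
        (by have := hIBlt _ hp₀B; omega)).pos_dist_of_ne hner
    · have hpe2 : cdist s p₀.1 p₀.2 = D := hpe
      have h1 : H.dist (c.getVert p₀.1) (c.getVert p₀.2) ≤ D := by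
        rw [← hpe2]
        exact hdub _ _ (hIAlt _ hp₀A) (hIBlt _ hp₀B)
      calc (H.dist (c.getVert p₀.1) (c.getVert p₀.2) : ℝ) ≤ (D : ℝ) := by exact_mod_cast h1
        _ ≤ _ := hcase
  · -- contradiction via the counting lemma
    exfalso
    rw [not_le, max_lt_iff, max_lt_iff] at hcase
    obtain ⟨h3D, hXD, hYD⟩ := hcase
    have hm4 : 4 ≤ D := by
      have : (3 : ℝ) < (D : ℝ) := h3D
      exact_mod_cast Nat.succ_le_of_lt (by exact_mod_cast this)
    have hsA : s < D * IA.card := by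
      have hapos : (0 : ℝ) < (IA.card : ℝ) := by
        have : (0 : ℕ) < IA.card := by omega
        exact_mod_cast this
      have := (div_lt_iff₀ hapos).mp hXD
      exact_mod_cast this
    have hsum : s + 6 < 2 * (IA.card + IB.card + D) := by
      have h1 : ((s / 2 : ℕ) : ℝ) + 3 < (D : ℝ) + (IA.card : ℝ) + (IB.card : ℝ) := by
        linarith
      have h2 : (s / 2 : ℕ) + 3 < D + IA.card + IB.card := by exact_mod_cast h1
      omega
    have hABm : ∀ i ∈ IA, ∀ j ∈ IB, i ≠ j → D ≤ cdist s i j := by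
      intro i hi j hj hij
      exact hmin (i, j) (by rw [hF, Finset.mem_filter, Finset.mem_product]; exact ⟨⟨hi, hj⟩, hij⟩)
    exact core s D IA IB hIAlt hIBlt ha2 (Finset.card_pos.mp hb1) hm4 hsA hsum hABm hAA hBB


end Dean
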